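/- Let φ(n,ω,x) = f_{ω_{n-1}} ∘ ⋯ ∘ f_{ω_0}(x) be a random iteration on a metric space S over (Ω = E^ℤ, ℙ = ν^ℤ) with shift σ, and let π : Ω → S satisfy the invariance f_{ω_0}(π(ω)) = π(σ(ω)) a.e. Suppose there exist a measurable c : Ω → [0,∞), r < 1 and m₀ such that for ℙ-a.e. ω, d(φ(n,ω,x), φ(n,ω,y)) ≤ c(ω) rⁿ for all x,y ∈ S and n ≥ m₀. Then for every x ∈ S, d(φ(n,ω,x), π(σⁿ(ω))) → 0 as n → ∞ for ℙ-a.e. ω (π is a forward random attractor). -/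
import Mathlib


open MeasureTheory Filter

variable {E S : Type*}

/-- The two-sided shift on `Ω = E^ℤ`: `(σ ω) n = ω (n+1)`. -/
def shift (ω : ℤ → E) : ℤ → E := fun n => ω (n + 1)

/-- The random iteration `φ(n, ω, x) = f_{ω_{n-1}} ∘ ⋯ ∘ f_{ω_0}(x)`. -/
def iterComp (f : E → S → S) (ω : ℤ → E) : ℕ → S → S
  | 0 => id
  | n + 1 => f (ω n) ∘ iterComp f ω n

lemma shift_iterate (ω : ℤ → E) (k : ℕ) (m : ℤ) : (shift^[k] ω) m = ω (m + k) := by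
  induction k generalizing ω with
  | zero => simp
  | succ k ih =>
    rw [Function.iterate_succ_apply, ih]
    simp [shift]
    ring_nf

/-- Forward random attractor: if `π` satisfies the invariance equation a.s. and the random
compositions contract at rate `c(ω) rⁿ` for `n ≥ m₀`, then for every `x ∈ S`,
`d(φ(n,ω,x), π(σⁿ ω)) → 0` almost surely. -/
theorem stmt10 [MeasurableSpace E] [MeasurableSpace S] [MetricSpace S]
    (ℙ : Measure (ℤ → E)) [IsProbabilityMeasure ℙ]
    (hshift : MeasurePreserving (shift (E := E)) ℙ ℙ)
    (f : E → S → S) (π : (ℤ → E) → S) (hπ : Measurable π)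
    (hinv : ∀ᵐ ω ∂ℙ, f (ω 0) (π ω) = π (shift ω))
    (c : (ℤ → E) → ℝ) (hc : Measurable c) (hcpos : ∀ ω, 0 ≤ c ω)
    (r : ℝ) (hr : r < 1) (m₀ : ℕ)
    (hcontr : ∀ᵐ ω ∂ℙ, ∀ x y : S, ∀ n, m₀ ≤ n →
      dist (iterComp f ω n x) (iterComp f ω n y) ≤ c ω * r ^ n) :
    ∀ x : S, ∀ᵐ ω ∂ℙ,
      Tendsto (fun n => dist (iterComp f ω n x) (π ((shift (E := E))^[n] ω)))
        atTop (nhds 0) := by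
  intro x
  have hinv' : ∀ᵐ ω ∂ℙ, ∀ k : ℕ,
      f ((shift^[k] ω) 0) (π (shift^[k] ω)) = π (shift (shift^[k] ω)) := by
    rw [ae_all_iff]
    intro k
    exact (hshift.iterate k).quasiMeasurePreserving.ae hinv
  filter_upwards [hinv', hcontr] with ω hω hcω
  have hfix : ∀ n : ℕ, π (shift^[n] ω) = iterComp f ω n (π ω) := by
    intro n
    induction n with
    | zero => simp [iterComp]
    | succ n ih =>
      rw [Function.iterate_succ_apply', ← hω n, ih, shift_iterate]
      simp [iterComp]
  have hb : ∀ n, m₀ ≤ n →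
      dist (iterComp f ω n x) (π (shift^[n] ω)) ≤ c ω * r ^ n := by
    intro n hn
    rw [hfix]
    exact hcω x (π ω) n hn
  rcases eq_or_lt_of_le (hcpos ω) with h0 | hcω0
  · have : ∀ᶠ n in atTop,
        dist (iterComp f ω n x) (π (shift^[n] ω)) = 0 := by
      filter_upwards [eventually_atTop.2 ⟨m₀, fun n hn => hb n hn⟩] with n hn
      have h2 := dist_nonneg (x := iterComp f ω n x) (y := π (shift^[n] ω))
      rw [← h0, zero_mul] at hn
      linarith
    have heq : (fun n => dist (iterComp f ω n x) (π (shift^[n] ω)))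
        =ᶠ[atTop] (fun _ => (0 : ℝ)) := this
    exact Tendsto.congr' heq.symm tendsto_const_nhds
  · rcases lt_or_ge r 0 with hrneg | hrpos
    · exfalso
      have hodd : Odd (2 * m₀ + 1) := ⟨m₀, by ring⟩
      have hpw : r ^ (2 * m₀ + 1) < 0 := hodd.pow_neg hrneg
      have h1 : (0 : ℝ) ≤ c ω * r ^ (2 * m₀ + 1) := by
        have := hcω x x (2 * m₀ + 1) (by omega)
        simpa using this
      nlinarith
    · have hlim : Tendsto (fun n : ℕ => c ω * r ^ n) atTop (nhds 0) := by
        have := (tendsto_pow_atTop_nhds_zero_of_lt_one hrpos hr).const_mul (c ω)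
        simpa using this
      exact squeeze_zero' (Eventually.of_forall fun n => dist_nonneg)
        (eventually_atTop.2 ⟨m₀, fun n hn => hb n hn⟩) hlim
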